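/- Let M be an n×n matrix over RatFunc ℂ (n ≥ 1) such that M - X • 1 is invertible, and let S(M) := (M - X • 1)⁻¹ + X • 1 be its spectral inverse. Then every complex root of (det (M - X • 1)).denom lies in the Gershgorin-type region Γ(S(M)); that is, the inverse spectrum of M is contained in the Gershgorin-type region of the polynomial extension of S(M). -/

import Mathlib

set_option synthInstance.maxHeartbeats 1000000
set_option maxHeartbeats 1000000

open Matrix Polynomial

/-- The polynomial extension `Ā` of a matrix over `RatFunc ℂ`: with
`L i = ∏ j (A i j).denom`, set `Ā i j = L i * A i j` off the diagonal and
`Ā i i = L i * (A i i - X) + X` on the diagonal. -/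
noncomputable def polyExt {α : Type} [Fintype α] [DecidableEq α]
    (A : Matrix α α (RatFunc ℂ)) : Matrix α α (RatFunc ℂ) :=
  Matrix.of fun i j =>
    if i = j then
      algebraMap (Polynomial ℂ) (RatFunc ℂ) (∏ k, (A i k).denom) * (A i i - RatFunc.X) +
        RatFunc.X
    else
      algebraMap (Polynomial ℂ) (RatFunc ℂ) (∏ k, (A i k).denom) * A i j

/-- The Gershgorin-type region of a matrix over `RatFunc ℂ`. -/
noncomputable def gershRegion {α : Type} [Fintype α] [DecidableEq α]
    (A : Matrix α α (RatFunc ℂ)) : Set ℂ :=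
  ⋃ i : α, {lam : ℂ |
    ‖lam - RatFunc.eval (RingHom.id ℂ) lam (polyExt A i i)‖ ≤
      ∑ j ∈ Finset.univ.erase i, ‖RatFunc.eval (RingHom.id ℂ) lam (polyExt A i j)‖}

/-- The spectral inverse of a square matrix over `RatFunc ℂ`:
`S(M) = (M - X•1)⁻¹ + X•1`. -/
noncomputable def specInv {α : Type} [Fintype α] [DecidableEq α]
    (M : Matrix α α (RatFunc ℂ)) : Matrix α α (RatFunc ℂ) :=
  (M - (RatFunc.X : RatFunc ℂ) • 1)⁻¹ + (RatFunc.X : RatFunc ℂ) • 1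


lemma exists_poly_of_denom_dvd (f : RatFunc ℂ) (L : Polynomial ℂ) (hd : f.denom ∣ L) :
    ∃ p : Polynomial ℂ, algebraMap (Polynomial ℂ) (RatFunc ℂ) L * f =
      algebraMap (Polynomial ℂ) (RatFunc ℂ) p := by
  obtain ⟨c, hc⟩ := hd
  refine ⟨c * f.num, ?_⟩
  have hden : algebraMap (Polynomial ℂ) (RatFunc ℂ) f.denom ≠ 0 :=
    RatFunc.algebraMap_ne_zero f.denom_ne_zero
  have key : algebraMap (Polynomial ℂ) (RatFunc ℂ) f.denom * f =
      algebraMap (Polynomial ℂ) (RatFunc ℂ) f.num := by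
    have h2 := RatFunc.num_div_denom f
    rw [div_eq_iff hden] at h2
    rw [mul_comm]
    exact h2.symm
  rw [hc, _root_.map_mul, _root_.map_mul,
    mul_comm (algebraMap (Polynomial ℂ) (RatFunc ℂ) f.denom) _, mul_assoc, key]

lemma gersh_of_det_eq_zero {n : ℕ} (hn : 1 ≤ n) (N : Matrix (Fin n) (Fin n) ℂ)
    (h : N.det = 0) :
    ∃ i, ‖N i i‖ ≤ ∑ j ∈ Finset.univ.erase i, ‖N i j‖ := by
  have : Nonempty (Fin n) := ⟨⟨0, hn⟩⟩
  obtain ⟨v, hv0, hv⟩ := Matrix.exists_mulVec_eq_zero_iff.2 h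
  obtain ⟨i, -, hi⟩ := Finset.exists_max_image Finset.univ (fun i => ‖v i‖)
    ⟨Classical.arbitrary _, Finset.mem_univ _⟩
  have hvi : 0 < ‖v i‖ := by
    obtain ⟨j, hj⟩ := Function.ne_iff.mp hv0
    calc 0 < ‖v j‖ := by simpa using hj
      _ ≤ ‖v i‖ := hi j (Finset.mem_univ j)
  refine ⟨i, ?_⟩
  have h0 : N i i * v i + ∑ j ∈ Finset.univ.erase i, N i j * v j = 0 := by
    rw [Finset.add_sum_erase _ (fun j => N i j * v j) (Finset.mem_univ i)]
    simpa [Matrix.mulVec, dotProduct] using congrFun hv i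
  have hsplit : N i i * v i = -∑ j ∈ Finset.univ.erase i, N i j * v j :=
    eq_neg_of_add_eq_zero_left h0
  have hchain : ‖N i i‖ * ‖v i‖ ≤ (∑ j ∈ Finset.univ.erase i, ‖N i j‖) * ‖v i‖ := by
    calc ‖N i i‖ * ‖v i‖ = ‖N i i * v i‖ := (norm_mul _ _).symm
      _ = ‖∑ j ∈ Finset.univ.erase i, N i j * v j‖ := by rw [hsplit, norm_neg]
      _ ≤ ∑ j ∈ Finset.univ.erase i, ‖N i j * v j‖ := norm_sum_le _ _
      _ = ∑ j ∈ Finset.univ.erase i, ‖N i j‖ * ‖v j‖ := by simp [norm_mul]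
      _ ≤ ∑ j ∈ Finset.univ.erase i, ‖N i j‖ * ‖v i‖ :=
          Finset.sum_le_sum fun j _ =>
            mul_le_mul_of_nonneg_left (hi j (Finset.mem_univ j)) (norm_nonneg _)
      _ = (∑ j ∈ Finset.univ.erase i, ‖N i j‖) * ‖v i‖ := (Finset.sum_mul _ _ _).symm
  exact le_of_mul_le_mul_right hchain hvi

theorem invSpec_subset_gershRegion_specInv {n : ℕ} (hn : 1 ≤ n)
    (M : Matrix (Fin n) (Fin n) (RatFunc ℂ))
    (hinv : IsUnit (M - (RatFunc.X : RatFunc ℂ) • 1))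
    (lam : ℂ) (h : (((M - (RatFunc.X : RatFunc ℂ) • 1).det).denom).eval lam = 0) :
    lam ∈ gershRegion (specInv M) := by
  classical
  set B : Matrix (Fin n) (Fin n) (RatFunc ℂ) := M - (RatFunc.X : RatFunc ℂ) • 1 with hBdef
  set C : Matrix (Fin n) (Fin n) (RatFunc ℂ) := B⁻¹ with hCdef
  set φ : Polynomial ℂ →+* RatFunc ℂ := algebraMap (Polynomial ℂ) (RatFunc ℂ) with hφdef
  have hdetB : B.det ≠ 0 := ((Matrix.isUnit_iff_isUnit_det B).mp hinv).ne_zero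
  -- entries of specInv
  have hS : ∀ i j, specInv M i j = C i j + if i = j then (RatFunc.X : RatFunc ℂ) else 0 := by
    intro i j
    simp [specInv, Matrix.add_apply, Matrix.smul_apply, Matrix.one_apply, mul_ite,
      smul_eq_mul, mul_one, mul_zero]
    rfl
  set L : Fin n → Polynomial ℂ := fun i => ∏ k, (specInv M i k).denom with hLdef
  -- denominators of C divide L
  have hdvd : ∀ i j, (C i j).denom ∣ L i := by
    intro i j
    have h1 : C i j = specInv M i j +
        φ (-(if i = j then Polynomial.X else 0)) := by
      rw [hS i j]
      split_ifs <;> simp [hφdef, RatFunc.algebraMap_X]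
    have h2 : (C i j).denom ∣ (specInv M i j).denom := by
      have := RatFunc.denom_add_dvd (specInv M i j)
        (φ (-(if i = j then Polynomial.X else 0)))
      rw [← h1, RatFunc.denom_algebraMap, mul_one] at this
      exact this
    exact h2.trans (Finset.dvd_prod_of_mem _ (Finset.mem_univ j))
  -- polynomials P
  have hex : ∀ i j, ∃ p : Polynomial ℂ, φ (L i) * C i j = φ p :=
    fun i j => exists_poly_of_denom_dvd _ _ (hdvd i j)
  choose P hP using hex
  -- determinant computation
  have hmap : (Matrix.of P).map φ = Matrix.diagonal (fun i => φ (L i)) * C := by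
    ext i j
    rw [Matrix.map_apply, Matrix.of_apply, Matrix.diagonal_mul, ← hP i j]
  have hdetmap : φ (Matrix.of P).det = (∏ i, φ (L i)) * C.det := by
    rw [RingHom.map_det, RingHom.mapMatrix_apply, hmap, Matrix.det_mul, Matrix.det_diagonal]
  have hdetC : C.det = (B.det)⁻¹ := by
    rw [hCdef, Matrix.det_nonsing_inv, Ring.inverse_eq_inv']
  have hstep : φ (Matrix.of P).det * B.det = ∏ i, φ (L i) := by
    rw [hdetmap, hdetC, mul_assoc, inv_mul_cancel₀ hdetB, mul_one]
  have hnumden : φ (Matrix.of P).det * φ (B.det).num = (∏ i, φ (L i)) * φ (B.det).denom := by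
    have hden : φ (B.det).denom ≠ 0 := RatFunc.algebraMap_ne_zero (B.det).denom_ne_zero
    have h3 := congrArg (· * φ (B.det).denom) hstep
    rw [mul_assoc] at h3
    rw [← h3]
    congr 1
    have h4 := RatFunc.num_div_denom B.det
    rw [div_eq_iff hden] at h4
    exact h4
  have hkey : (Matrix.of P).det * (B.det).num = (∏ i, L i) * (B.det).denom := by
    apply RatFunc.algebraMap_injective ℂ
    rw [_root_.map_mul, _root_.map_mul, _root_.map_prod]
    exact hnumden
  -- evaluate at lam
  have hnum : (B.det).num.eval lam ≠ 0 := by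
    intro h0
    obtain ⟨u, w, huw⟩ := RatFunc.isCoprime_num_denom B.det
    have := congrArg (Polynomial.eval lam) huw
    simp [h0, h] at this
  have hevaldet : ((Matrix.of P).det).eval lam = 0 := by
    have := congrArg (Polynomial.eval lam) hkey
    simp only [Polynomial.eval_mul] at this
    rw [h, mul_zero] at this
    rcases mul_eq_zero.mp this with h1 | h1
    · exact h1
    · exact absurd h1 hnum
  -- complex matrix N
  set N : Matrix (Fin n) (Fin n) ℂ := Matrix.of (fun i j => (P i j).eval lam) with hNdef
  have hdetN : N.det = 0 := by
    have : N = (Matrix.of P).map (Polynomial.evalRingHom lam) := by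
      ext i j; simp [hNdef]
    rw [this, ← RingHom.mapMatrix_apply, ← RingHom.map_det]
    simpa using hevaldet
  obtain ⟨i, hgersh⟩ := gersh_of_det_eq_zero hn N hdetN
  -- connect evaluations
  have hevalP : ∀ p : Polynomial ℂ, RatFunc.eval (RingHom.id ℂ) lam (φ p) = p.eval lam := by
    intro p
    rw [hφdef, RatFunc.eval_algebraMap]
    simp
  have hoff : ∀ j, j ≠ i → polyExt (specInv M) i j = φ (P i j) := by
    intro j hj
    rw [polyExt, Matrix.of_apply, if_neg (Ne.symm hj), hS i j, if_neg (Ne.symm hj), add_zero]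
    exact hP i j
  have hdiag : polyExt (specInv M) i i = φ (P i i + Polynomial.X) := by
    rw [polyExt, Matrix.of_apply, if_pos rfl]
    have : specInv M i i - RatFunc.X = C i i := by
      rw [hS i i, if_pos rfl]; ring
    rw [this]
    show φ (L i) * C i i + RatFunc.X = _
    rw [hP i i, _root_.map_add, hφdef, RatFunc.algebraMap_X]
  rw [gershRegion, Set.mem_iUnion]
  refine ⟨i, ?_⟩
  simp only [Set.mem_setOf_eq]
  have hd : lam - RatFunc.eval (RingHom.id ℂ) lam (polyExt (specInv M) i i) = -(N i i) := by
    rw [hdiag, hevalP, Polynomial.eval_add, Polynomial.eval_X]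
    have hNi : N i i = (P i i).eval lam := rfl
    rw [hNi]
    ring
  rw [hd, norm_neg]
  refine le_trans hgersh (le_of_eq ?_)
  apply Finset.sum_congr rfl
  intro j hj
  rw [hoff j (Finset.ne_of_mem_erase hj), hevalP]
  rfl
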